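/- Let n ≥ 1, c > 1, M ∈ ℕ, and let Φ = Σ_{m ∈ ℕ^n, ‖m‖∞ ≤ M} d_m e_m ∈ D be a normalized vector (Σ_m |d_m|² = 1) supported on number states whose entries are all at most M. Then for every r ∈ ℕ: ⟨Φ, π(g^r_c) Φ⟩ ≤ (c/(c−1))^{M+1}. -/

import Mathlib

open scoped ComplexOrder

noncomputable section

/-- The Weyl algebra `W_n`: a complex `*`-algebra generated by `a 1, …, a n` and their
adjoints, satisfying the canonical commutation relations, in which the normally ordered
monomials `(a*)^s a^t` form a basis (this pins the algebra down up to `*`-isomorphism). -/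
structure WeylAlgebra (n : ℕ) where
  carrier : Type
  [ring : Ring carrier]
  [alg : Algebra ℂ carrier]
  [starRing : StarRing carrier]
  [starModule : StarModule ℂ carrier]
  a : Fin n → carrier
  comm_aa : ∀ i j, a i * a j = a j * a i
  comm_ss : ∀ i j, star (a i) * star (a j) = star (a j) * star (a i)
  ccr : ∀ i j : Fin n, a i * star (a j) - star (a j) * a i = if i = j then 1 else 0
  basis : Module.Basis ((Fin n → ℕ) × (Fin n → ℕ)) ℂ carrier
  basis_eq : ∀ st : (Fin n → ℕ) × (Fin n → ℕ),
    basis st = (List.ofFn fun i => star (a i) ^ st.1 i).prod *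
               (List.ofFn fun i => (a i) ^ st.2 i).prod

attribute [instance] WeylAlgebra.ring WeylAlgebra.alg WeylAlgebra.starRing
  WeylAlgebra.starModule

namespace WeylAlgebra

variable {n : ℕ} (W : WeylAlgebra n)

/-- The monomial `a^t = ∏ i, (a i)^(t i)`. -/
def amon (t : Fin n → ℕ) : W.carrier := (List.ofFn fun i => W.a i ^ t i).prod

/-- The normally ordered monomial `(a*)^s a^t`. -/
def nmon (s t : Fin n → ℕ) : W.carrier :=
  (List.ofFn fun i => star (W.a i) ^ s i).prod * (List.ofFn fun i => W.a i ^ t i).prod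

/-- The `l₁`-norm of the coefficients of the (unique) normal form of `p`. -/
def l1 (p : W.carrier) : ℝ := (W.basis.repr p).sum fun _ c => ‖c‖

/-- The degree of `p`: the maximal `‖s‖₁ + ‖t‖₁` over monomials appearing in the normal
form of `p`. -/
def deg (p : W.carrier) : ℕ :=
  (W.basis.repr p).support.sup fun st => (∑ i, st.1 i) + (∑ i, st.2 i)

/-- `p` is a sum of squares, i.e. `p ∈ Σ²`. -/
def IsSOS (p : W.carrier) : Prop :=
  ∃ (N : ℕ) (f : Fin N → W.carrier), p = ∑ i, star (f i) * f i

/-- `p ∈ Σ²_k`: `p` is a sum of squares of elements of degree at most `k`. -/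
def IsSOSdeg (k : ℕ) (p : W.carrier) : Prop :=
  ∃ (N : ℕ) (f : Fin N → W.carrier), (∀ i, W.deg (f i) ≤ k) ∧ p = ∑ i, star (f i) * f i

/-- The element `g^r_c = ∑_{‖t‖₁ ≤ r} (n-1)!/(c^{‖t‖₁} (n+‖t‖₁-1)!) • a^t (a^t)*`. -/
def gpoly (c : ℝ) (r : ℕ) : W.carrier :=
  ∑ t ∈ (Fintype.piFinset fun _ : Fin n => Finset.range (r + 1)).filter
      (fun t => ∑ i, t i ≤ r),
    ((Nat.factorial (n - 1) : ℂ) /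
        ((c : ℂ) ^ (∑ i, t i) * (Nat.factorial (n + (∑ i, t i) - 1) : ℂ))) •
      (W.amon t * star (W.amon t))

/-- The value in `W` of a single letter (`Sum.inl i ↦ a i`, `Sum.inr i ↦ (a i)*`). -/
def letterVal : Fin n ⊕ Fin n → W.carrier
  | Sum.inl i => W.a i
  | Sum.inr i => star (W.a i)

/-- The value in `W` of a word (monomial) in the letters `a_1,…,a_n,a_1*,…,a_n*`. -/
def wordVal (w : List (Fin n ⊕ Fin n)) : W.carrier := (w.map W.letterVal).prod

end WeylAlgebra

/-- The domain of the Schrödinger representation: finitely supported functions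
`ℕ^n → ℂ`. -/
abbrev DSpace (n : ℕ) := (Fin n → ℕ) →₀ ℂ

/-- The number basis vector `e_m`. -/
def eVec {n : ℕ} (m : Fin n → ℕ) : DSpace n := Finsupp.single m 1

/-- The inner product `⟨f, g⟩ = ∑_m conj (f m) * g m` on `DSpace n`
(antilinear in the first argument). -/
def innerD {n : ℕ} (f g : DSpace n) : ℂ := f.sum fun m c => (starRingEnd ℂ) c * g m

/-- The Schrödinger (Fock) representation of the Weyl algebra `W` on `DSpace n`,
specified by its action on the number basis. -/
structure Schrodinger {n : ℕ} (W : WeylAlgebra n) where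
  rep : W.carrier →ₐ[ℂ] Module.End ℂ (DSpace n)
  rep_a : ∀ (i : Fin n) (m : Fin n → ℕ),
    rep (W.a i) (eVec m) =
      (Real.sqrt (m i) : ℂ) • eVec (Function.update m i (m i - 1))
  rep_astar : ∀ (i : Fin n) (m : Fin n → ℕ),
    rep (star (W.a i)) (eVec m) =
      (Real.sqrt (m i + 1) : ℂ) • eVec (Function.update m i (m i + 1))

namespace Schrodinger

variable {n : ℕ} {W : WeylAlgebra n} (S : Schrodinger W)

/-- `π(p) ≥ 0`: the quadratic form of `π(p)` is nonnegative on the domain. -/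
def PiNonneg (p : W.carrier) : Prop := ∀ φ : DSpace n, 0 ≤ innerD φ (S.rep p φ)

/-- The set of energies `⟨φ, π(p) φ⟩` over normalized `φ` in the domain. -/
def energySet (p : W.carrier) : Set ℝ :=
  { x | ∃ φ : DSpace n, innerD φ φ = 1 ∧ (innerD φ (S.rep p φ)).re = x }

/-- `λ_inf(p)`, the infimum of `⟨φ, π(p) φ⟩` over normalized `φ`. -/
def lambdaInf (p : W.carrier) : ℝ := sInf (S.energySet p)

end Schrodinger


open Finset

namespace SchrodingerAux

variable {n : ℕ} {W : WeylAlgebra n} (S : Schrodinger W)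

/-- raising power -/
lemma rep_star_pow (i : Fin n) (p : ℕ) (m : Fin n → ℕ) :
    S.rep (star (W.a i) ^ p) (eVec m) =
      ((∏ j ∈ range p, Real.sqrt ((m i : ℝ) + j + 1) : ℝ) : ℂ) •
        eVec (Function.update m i (m i + p)) := by
  induction p generalizing m with
  | zero =>
    simp [Function.update_eq_self]
  | succ p ih =>
    rw [pow_succ, map_mul, Module.End.mul_apply, S.rep_astar, map_smul, ih]
    rw [smul_smul]
    have hmi : (Function.update m i (m i + 1)) i = m i + 1 := Function.update_self i _ m
    have hsc : Real.sqrt ((m i : ℝ) + 1) * ∏ j ∈ range p, Real.sqrt (((m i + 1 : ℕ) : ℝ) + j + 1)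
        = ∏ j ∈ range (p+1), Real.sqrt ((m i : ℝ) + j + 1) := by
      rw [Finset.prod_range_succ' (fun j => Real.sqrt ((m i : ℝ) + j + 1)) p]
      rw [mul_comm]
      congr 1
      · apply Finset.prod_congr rfl; intro j _; push_cast; ring_nf
      · push_cast; ring_nf
    rw [hmi]
    congr 1
    · rw [← Complex.ofReal_mul, hsc]
    · rw [Function.update_idem]
      have : m i + 1 + p = m i + (p+1) := by omega
      rw [this]

/-- lowering power -/
lemma rep_pow (i : Fin n) (p : ℕ) (m : Fin n → ℕ) :
    S.rep (W.a i ^ p) (eVec m) =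
      ((∏ j ∈ range p, Real.sqrt ((m i - j : ℕ) : ℝ) : ℝ) : ℂ) •
        eVec (Function.update m i (m i - p)) := by
  induction p generalizing m with
  | zero => simp [Function.update_eq_self]
  | succ p ih =>
    rw [pow_succ, map_mul, Module.End.mul_apply, S.rep_a, map_smul, ih]
    rw [smul_smul]
    have hmi : (Function.update m i (m i - 1)) i = m i - 1 := Function.update_self i _ m
    rw [hmi]
    have hsc : Real.sqrt ((m i : ℕ) : ℝ) * ∏ j ∈ range p, Real.sqrt (((m i - 1 - j : ℕ) : ℝ))
        = ∏ j ∈ range (p+1), Real.sqrt (((m i - j : ℕ) : ℝ)) := by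
      rw [Finset.prod_range_succ' (fun j => Real.sqrt (((m i - j : ℕ) : ℝ))) p]
      rw [mul_comm]
      congr 1
      apply Finset.prod_congr rfl; intro j _
      congr 2
      omega
    congr 1
    · rw [← Complex.ofReal_mul, hsc]
    · rw [Function.update_idem]
      have : m i - 1 - p = m i - (p+1) := by omega
      rw [this]


/-- list raising -/
lemma rep_star_list (t : Fin n → ℕ) (L : List (Fin n)) (hL : L.Nodup) (m : Fin n → ℕ) :
    S.rep ((L.map fun i => star (W.a i) ^ t i).prod) (eVec m) =
      ((∏ i ∈ L.toFinset, ∏ j ∈ range (t i), Real.sqrt ((m i : ℝ) + j + 1) : ℝ) : ℂ) •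
        eVec (fun i => if i ∈ L then m i + t i else m i) := by
  induction L with
  | nil => simp
  | cons a L ih =>
    have haL : a ∉ L := (List.nodup_cons.1 hL).1
    have hLn : L.Nodup := (List.nodup_cons.1 hL).2
    rw [List.map_cons, List.prod_cons, map_mul, Module.End.mul_apply, ih hLn, map_smul,
      rep_star_pow]
    set m1 : Fin n → ℕ := fun i => if i ∈ L then m i + t i else m i with hm1
    have hm1a : m1 a = m a := by simp [hm1, haL]
    rw [smul_smul, ← Complex.ofReal_mul]
    simp only [hm1, haL, if_neg, if_false]
    congr 1
    · congr 1
      rw [List.toFinset_cons, Finset.prod_insert (by simpa using haL)]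
      ring
    · congr 1
      funext x
      by_cases hx : x = a
      · subst hx
        simp [Function.update_self, haL]
      · rw [Function.update_of_ne hx]
        simp only [List.mem_cons]
        by_cases hxL : x ∈ L <;> simp [hxL, hx]

/-- list lowering -/
lemma rep_list (t : Fin n → ℕ) (L : List (Fin n)) (hL : L.Nodup) (m : Fin n → ℕ) :
    S.rep ((L.map fun i => W.a i ^ t i).prod) (eVec m) =
      ((∏ i ∈ L.toFinset, ∏ j ∈ range (t i), Real.sqrt (((m i - j : ℕ) : ℝ)) : ℝ) : ℂ) •
        eVec (fun i => if i ∈ L then m i - t i else m i) := by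
  induction L with
  | nil => simp
  | cons a L ih =>
    have haL : a ∉ L := (List.nodup_cons.1 hL).1
    have hLn : L.Nodup := (List.nodup_cons.1 hL).2
    rw [List.map_cons, List.prod_cons, map_mul, Module.End.mul_apply, ih hLn, map_smul,
      rep_pow]
    set m1 : Fin n → ℕ := fun i => if i ∈ L then m i - t i else m i with hm1
    have hm1a : m1 a = m a := by simp [hm1, haL]
    rw [smul_smul, ← Complex.ofReal_mul]
    simp only [hm1, haL, if_neg, if_false]
    congr 1
    · congr 1
      rw [List.toFinset_cons, Finset.prod_insert (by simpa using haL)]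
      ring
    · congr 1
      funext x
      by_cases hx : x = a
      · subst hx
        simp [Function.update_self, haL]
      · rw [Function.update_of_ne hx]
        simp only [List.mem_cons]
        by_cases hxL : x ∈ L <;> simp [hxL, hx]

/-- star of a mapped product -/
lemma star_map_prod (L : List (Fin n)) (f : Fin n → W.carrier) :
    star ((L.map f).prod) = (L.reverse.map fun i => star (f i)).prod := by
  induction L with
  | nil => simp
  | cons a L ih =>
    rw [List.map_cons, List.prod_cons, star_mul, ih, List.reverse_cons, List.map_append,
      List.prod_append]
    simp

/-- the eigenvalue of `a^t (a^t)*` on `e_m`, as a natural number -/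
def evN (t m : Fin n → ℕ) : ℕ := ∏ i, ∏ j ∈ range (t i), (m i + j + 1)

lemma rep_amon_star (t m : Fin n → ℕ) :
    S.rep (W.amon t * star (W.amon t)) (eVec m) = ((evN t m : ℝ) : ℂ) • eVec m := by
  classical
  have hamon : W.amon t = ((List.finRange n).map fun i => W.a i ^ t i).prod := by
    rw [WeylAlgebra.amon, List.ofFn_eq_map]
  have hstar : star (W.amon t) = ((List.finRange n).reverse.map fun i => star (W.a i) ^ t i).prod := by
    rw [hamon, star_map_prod]
    congr 1
    apply List.map_congr_left
    intro i _
    rw [star_pow]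
  rw [map_mul, Module.End.mul_apply, hstar,
    rep_star_list S t _ (List.nodup_reverse.2 (List.nodup_finRange n)) m]
  have hmem : ∀ x : Fin n, x ∈ (List.finRange n).reverse := by
    intro x; rw [List.mem_reverse]; exact List.mem_finRange x
  have hvec : (fun i => if i ∈ (List.finRange n).reverse then m i + t i else m i)
      = fun i => m i + t i := by funext i; simp [hmem i]
  have htofin : ((List.finRange n).reverse).toFinset = (univ : Finset (Fin n)) := by
    ext x; simp [hmem x]
  rw [hvec, htofin, map_smul, hamon,
    rep_list S t _ (List.nodup_finRange n) (fun i => m i + t i)]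
  have hvec2 : (fun i => if i ∈ List.finRange n then m i + t i - t i else m i + t i) = m := by
    funext i; simp [List.mem_finRange]
  have htofin2 : (List.finRange n).toFinset = (univ : Finset (Fin n)) := by
    ext x; simp [List.mem_finRange]
  rw [hvec2, htofin2, smul_smul, ← Complex.ofReal_mul]
  congr 2
  rw [← Finset.prod_mul_distrib]
  rw [evN]
  push_cast
  apply Finset.prod_congr rfl
  intro i _
  have hre : ∏ j ∈ range (t i), Real.sqrt (((m i + t i - j : ℕ) : ℝ))
      = ∏ j ∈ range (t i), Real.sqrt ((m i : ℝ) + j + 1) := by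
    rw [← Finset.prod_range_reflect (fun j => Real.sqrt ((m i : ℝ) + j + 1)) (t i)]
    apply Finset.prod_congr rfl
    intro j hj
    rw [Finset.mem_range] at hj
    congr 1
    have h1 : m i + t i - j = m i + (t i - 1 - j) + 1 := by omega
    rw [h1]
    push_cast
    ring
  rw [hre, ← Finset.prod_mul_distrib]
  apply Finset.prod_congr rfl
  intro j _
  rw [Real.mul_self_sqrt (by positivity)]


/-- real coefficient -/
def coefR (n : ℕ) (c : ℝ) (k : ℕ) : ℝ :=
  ((n-1).factorial : ℝ) / (c ^ k * ((n + k - 1).factorial : ℝ))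

lemma coef_cast (c : ℝ) (k : ℕ) :
    ((Nat.factorial (n - 1) : ℂ) / ((c : ℂ) ^ k * (Nat.factorial (n + k - 1) : ℂ)))
      = ((coefR n c k : ℝ) : ℂ) := by
  rw [coefR]
  push_cast
  ring

/-- the real diagonal value of gpoly on e_m -/
def LamR (c : ℝ) (r : ℕ) (m : Fin n → ℕ) : ℝ :=
  ∑ t ∈ (Fintype.piFinset fun _ : Fin n => Finset.range (r + 1)).filter
      (fun t => ∑ i, t i ≤ r),
    coefR n c (∑ i, t i) * (evN t m : ℝ)

lemma rep_gpoly (c : ℝ) (r : ℕ) (m : Fin n → ℕ) :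
    S.rep (W.gpoly c r) (eVec m) = ((LamR (n := n) c r m : ℝ) : ℂ) • eVec m := by
  rw [WeylAlgebra.gpoly, map_sum, LinearMap.sum_apply]
  have : ∀ t ∈ (Fintype.piFinset fun _ : Fin n => Finset.range (r + 1)).filter
      (fun t => ∑ i, t i ≤ r),
      (S.rep (((Nat.factorial (n - 1) : ℂ) /
        ((c : ℂ) ^ (∑ i, t i) * (Nat.factorial (n + (∑ i, t i) - 1) : ℂ))) •
          (W.amon t * star (W.amon t)))) (eVec m)
        = ((coefR n c (∑ i, t i) * (evN t m : ℝ) : ℝ) : ℂ) • eVec m := by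
    intro t _
    rw [map_smul, LinearMap.smul_apply, rep_amon_star, coef_cast, smul_smul,
      ← Complex.ofReal_mul]
  rw [Finset.sum_congr rfl this, ← Finset.sum_smul, LamR]
  congr 1
  rw [Complex.ofReal_sum]

lemma rep_gpoly_apply (c : ℝ) (r : ℕ) (φ : DSpace n) (m0 : Fin n → ℕ) :
    (S.rep (W.gpoly c r) φ) m0 = ((LamR (n := n) c r m0 : ℝ) : ℂ) * φ m0 := by
  classical
  have hφ : φ = φ.sum fun m d => d • eVec m := by
    simp only [eVec, Finsupp.smul_single, smul_eq_mul, mul_one]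
    exact (Finsupp.sum_single φ).symm
  conv_lhs => rw [hφ]
  rw [map_finsuppSum]
  have hterm : ∀ m d, S.rep (W.gpoly c r) (d • eVec m)
      = (d * ((LamR (n := n) c r m : ℝ) : ℂ)) • eVec m := by
    intro m d
    rw [map_smul, rep_gpoly, smul_smul]
  simp only [hterm]
  rw [Finsupp.sum_apply]
  rw [Finsupp.sum]
  have : ∀ m ∈ φ.support,
      ((d : ℂ) → True) := fun _ _ _ => trivial
  have hsum : ∑ m ∈ φ.support, ((φ m * ((LamR (n := n) c r m : ℝ) : ℂ)) • eVec m) m0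
      = ∑ m ∈ φ.support, (if m = m0 then (LamR (n := n) c r m0 : ℂ) * φ m0 else 0) := by
    apply Finset.sum_congr rfl
    intro m _
    rw [Finsupp.smul_apply, eVec, Finsupp.single_apply]
    by_cases h : m = m0
    · subst h; simp [mul_comm]
    · simp [h]
  rw [hsum, Finset.sum_ite_eq' φ.support m0]
  by_cases h : m0 ∈ φ.support
  · simp [h]
  · rw [Finsupp.notMem_support_iff] at h
    simp [h]

lemma innerD_gpoly (c : ℝ) (r : ℕ) (φ : DSpace n) :
    innerD φ (S.rep (W.gpoly c r) φ)
      = ((∑ m ∈ φ.support, LamR (n := n) c r m * Complex.normSq (φ m) : ℝ) : ℂ) := by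
  rw [innerD, Finsupp.sum, Complex.ofReal_sum]
  apply Finset.sum_congr rfl
  intro m _
  rw [rep_gpoly_apply]
  rw [Complex.ofReal_mul, Complex.normSq_eq_conj_mul_self]
  ring

lemma innerD_self (φ : DSpace n) :
    innerD φ φ = ((∑ m ∈ φ.support, Complex.normSq (φ m) : ℝ) : ℂ) := by
  rw [innerD, Finsupp.sum, Complex.ofReal_sum]
  apply Finset.sum_congr rfl
  intro m _
  rw [Complex.normSq_eq_conj_mul_self]

end SchrodingerAux

namespace SchrodingerAux

open Finset

private lemma Tsum_step (x : ℝ) (M r : ℕ) :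
    (1 - x) * ∑ k ∈ range (r+1), ((M+1+k).choose k : ℝ) * x ^ k =
      (∑ k ∈ range (r+1), ((M+k).choose k : ℝ) * x ^ k) - ((M+1+r).choose r : ℝ) * x ^ (r+1) := by
  induction r with
  | zero => simp
  | succ r ih =>
    rw [sum_range_succ, sum_range_succ (f := fun k => ((M+k).choose k : ℝ) * x ^ k), mul_add, ih]
    have pas : ((M+1+(r+1)).choose (r+1) : ℝ) = ((M+(r+1)).choose (r+1) : ℝ) + ((M+1+r).choose r : ℝ) := by
      have : (M+1+(r+1)).choose (r+1) = (M+(r+1)).choose (r+1) + (M+1+r).choose r := by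
        have h := Nat.choose_succ_succ (M+1+r) r
        have e1 : M+1+(r+1) = (M+1+r)+1 := by ring
        have e2 : (M+1+r).choose (r+1) = (M+(r+1)).choose (r+1) := by ring_nf
        rw [e1, h, e2]; ring
      exact_mod_cast this
    rw [pas]; ring

private lemma Tsum_le (x : ℝ) (hx0 : 0 ≤ x) (hx1 : x < 1) (M r : ℕ) :
    ∑ k ∈ range (r+1), ((M+k).choose k : ℝ) * x ^ k ≤ (1/(1-x)) ^ (M+1) := by
  induction M with
  | zero =>
    have h1x : 0 < 1 - x := by linarith
    have : (1 - x) * ∑ k ∈ range (r+1), ((0+k).choose k : ℝ) * x ^ k = 1 - x^(r+1) := by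
      have e : ∑ k ∈ range (r+1), ((0+k).choose k : ℝ) * x ^ k = ∑ k ∈ range (r+1), x ^ k := by
        apply Finset.sum_congr rfl; intro k _; simp
      rw [e]; nlinarith [geom_sum_mul x (r+1)]
    have hle : (1 - x) * ∑ k ∈ range (r+1), ((0+k).choose k : ℝ) * x ^ k ≤ 1 := by
      rw [this]; nlinarith [pow_nonneg hx0 (r+1)]
    rw [pow_one, le_div_iff₀ h1x]
    linarith [hle, mul_comm (1-x) (∑ k ∈ range (r+1), ((0+k).choose k : ℝ) * x ^ k)]
  | succ M ih =>
    have h1x : 0 < 1 - x := by linarith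
    have step := Tsum_step x M r
    have hle : (1 - x) * ∑ k ∈ range (r+1), ((M+1+k).choose k : ℝ) * x ^ k ≤ (1/(1-x))^(M+1) := by
      rw [step]
      have : ((M+1+r).choose r : ℝ) * x ^ (r+1) ≥ 0 := by positivity
      linarith [ih]
    have : ∑ k ∈ range (r+1), ((M+1+k).choose k : ℝ) * x ^ k ≤ (1/(1-x))^(M+1) / (1-x) := by
      rw [le_div_iff₀ h1x]; linarith [mul_comm (1-x) (∑ k ∈ range (r+1), ((M+1+k).choose k : ℝ) * x ^ k)]
    calc _ ≤ (1/(1-x))^(M+1) / (1-x) := this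
      _ = (1/(1-x))^(M+1+1) := by rw [pow_succ (1/(1-x)) (M+1), div_eq_mul_one_div]

private lemma card_sum_eq (n k : ℕ) :
    (Finset.piAntidiag (univ : Finset (Fin n)) k).card = (n + k - 1).choose k := by
  classical
  have h := Finset.map_sym_eq_piAntidiag (univ : Finset (Fin n)) k
  have hcard : (Finset.piAntidiag (univ : Finset (Fin n)) k).card
      = ((univ : Finset (Fin n)).sym k).card := by
    rw [← h, Finset.card_map]
  rw [hcard]
  have huniv : ((univ : Finset (Fin n)).sym k) = (univ : Finset (Sym (Fin n) k)) := by
    ext m; simp [Finset.mem_sym_iff]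
  rw [huniv, Finset.card_univ, Sym.card_sym_eq_choose]
  simp

private lemma filter_eq_piAntidiag (n r k : ℕ) (hk : k ≤ r) :
    ((Fintype.piFinset fun _ : Fin n => Finset.range (r + 1)).filter
        (fun t => ∑ i, t i ≤ r)).filter (fun t => (∑ i, t i) = k) =
      Finset.piAntidiag (univ : Finset (Fin n)) k := by
  classical
  ext t
  simp only [Finset.mem_filter, Fintype.mem_piFinset, Finset.mem_range, Finset.mem_piAntidiag,
    Finset.mem_univ, ne_eq, and_true]
  constructor
  · rintro ⟨⟨-, -⟩, hs⟩; exact ⟨hs, fun i _ => trivial⟩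
  · rintro ⟨hs, -⟩
    have hle : ∀ i, t i ≤ k := fun i =>
      hs ▸ Finset.single_le_sum (fun j _ => Nat.zero_le _) (Finset.mem_univ i)
    exact ⟨⟨fun i => by have := hle i; omega, le_trans (le_of_eq hs) hk⟩, hs⟩

def Aval (M k : ℕ) : ℕ := ∏ j ∈ range k, (M + 1 + j)

private lemma Aval_mul_le (M a b : ℕ) : Aval M a * Aval M b ≤ Aval M (a + b) := by
  unfold Aval
  rw [Finset.prod_range_add]
  apply Nat.mul_le_mul_left
  apply Finset.prod_le_prod'
  intro i _; omega

private lemma Aval_prod_le {n : ℕ} (M : ℕ) (t : Fin n → ℕ) (s : Finset (Fin n)) :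
    ∏ i ∈ s, Aval M (t i) ≤ Aval M (∑ i ∈ s, t i) := by
  classical
  induction s using Finset.cons_induction with
  | empty => simp [Aval]
  | cons a s ha ih =>
    rw [Finset.prod_cons, Finset.sum_cons]
    calc Aval M (t a) * ∏ i ∈ s, Aval M (t i) ≤ Aval M (t a) * Aval M (∑ i ∈ s, t i) :=
          Nat.mul_le_mul_left _ ih
      _ ≤ _ := Aval_mul_le M _ _

private lemma Aval_factorial (M k : ℕ) : Aval M k * M.factorial = (M + k).factorial := by
  induction k with
  | zero => simp [Aval]
  | succ k ih =>
    unfold Aval at *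
    rw [Finset.prod_range_succ]
    have : M + (k+1) = (M + k) + 1 := by ring
    rw [this, Nat.factorial_succ, ← ih]
    ring

private lemma coeff_identity (n M k : ℕ) (hn : 1 ≤ n) (c : ℝ) (hc : 1 < c) :
    ((n + k - 1).choose k : ℝ) * coefR n c k * (Aval M k : ℝ)
      = ((M + k).choose k : ℝ) * (1/c) ^ k := by
  rw [coefR]
  have hch : (n + k - 1).choose k * k.factorial * (n - 1).factorial = (n + k - 1).factorial := by
    have h1 : k ≤ n + k - 1 := by omega
    have := Nat.choose_mul_factorial_mul_factorial h1
    have h2 : n + k - 1 - k = n - 1 := by omega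
    rw [h2] at this; exact this
  have hch2 : (M + k).choose k * k.factorial * M.factorial = (M + k).factorial := by
    have h1 : k ≤ M + k := by omega
    have := Nat.choose_mul_factorial_mul_factorial h1
    have h2 : M + k - k = M := by omega
    rw [h2] at this; exact this
  have hA := Aval_factorial M k
  have hc0 : (c:ℝ) ≠ 0 := by positivity
  have f1 : ((n+k-1).factorial : ℝ) ≠ 0 := by exact_mod_cast Nat.factorial_ne_zero _
  have f2 : (M.factorial : ℝ) ≠ 0 := by exact_mod_cast Nat.factorial_ne_zero _
  have f3 : (k.factorial : ℝ) ≠ 0 := by exact_mod_cast Nat.factorial_ne_zero _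
  field_simp
  have e1 : ((n + k - 1).choose k : ℝ) * (k.factorial : ℝ) * ((n - 1).factorial : ℝ)
      = ((n + k - 1).factorial : ℝ) := by exact_mod_cast hch
  have e2 : ((M + k).choose k : ℝ) * (k.factorial : ℝ) * (M.factorial : ℝ)
      = ((M + k).factorial : ℝ) := by exact_mod_cast hch2
  have e3 : (Aval M k : ℝ) * (M.factorial : ℝ) = ((M + k).factorial : ℝ) := by exact_mod_cast hA
  have hAval : (Aval M k : ℝ) = ((M + k).choose k : ℝ) * (k.factorial : ℝ) := by
    have := mul_right_cancel₀ f2 (e3.trans e2.symm)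
    linarith [this]
  rw [hAval, ← e1]
  have hck : c ^ k * c⁻¹ ^ k = 1 := by rw [← mul_pow, mul_inv_cancel₀ hc0, one_pow]
  ring_nf
  rw [mul_assoc _ (c ^ k), hck, mul_one]

/-- the eigenvalue bound -/
lemma LamR_le {n : ℕ} (hn : 1 ≤ n) (c : ℝ) (hc : 1 < c) (M : ℕ) (r : ℕ) (m : Fin n → ℕ)
    (hm : ∀ i, m i ≤ M) :
    LamR (n := n) c r m ≤ (c / (c - 1)) ^ (M + 1) := by
  have hcpos : (0:ℝ) < c := lt_trans one_pos hc
  have hcoef_nonneg : ∀ k, 0 ≤ coefR n c k := by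
    intro k; rw [coefR]; positivity
  -- step 1: evN ≤ Aval
  have hev : ∀ t : Fin n → ℕ, evN t m ≤ Aval M (∑ i, t i) := by
    intro t
    calc evN t m ≤ ∏ i, Aval M (t i) := by
          rw [evN]
          apply Finset.prod_le_prod'
          intro i _
          rw [Aval]
          apply Finset.prod_le_prod'
          intro j _
          have := hm i
          omega
      _ ≤ Aval M (∑ i, t i) := Aval_prod_le M t univ
  -- step 2
  have h2 : LamR (n := n) c r m ≤
      ∑ t ∈ (Fintype.piFinset fun _ : Fin n => Finset.range (r + 1)).filter
        (fun t => ∑ i, t i ≤ r), coefR n c (∑ i, t i) * (Aval M (∑ i, t i) : ℝ) := by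
    rw [LamR]
    apply Finset.sum_le_sum
    intro t _
    apply mul_le_mul_of_nonneg_left _ (hcoef_nonneg _)
    exact_mod_cast hev t
  -- step 3: fiberwise
  have h3 : ∑ t ∈ (Fintype.piFinset fun _ : Fin n => Finset.range (r + 1)).filter
        (fun t => ∑ i, t i ≤ r), coefR n c (∑ i, t i) * (Aval M (∑ i, t i) : ℝ)
      = ∑ k ∈ range (r+1), ((M+k).choose k : ℝ) * (1/c) ^ k := by
    have hmaps : ∀ t ∈ (Fintype.piFinset fun _ : Fin n => Finset.range (r + 1)).filter
        (fun t => ∑ i, t i ≤ r), (∑ i, t i) ∈ range (r+1) := by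
      intro t ht
      rw [Finset.mem_filter] at ht
      rw [Finset.mem_range]
      omega
    rw [← Finset.sum_fiberwise_of_maps_to hmaps
      (fun t => coefR n c (∑ i, t i) * (Aval M (∑ i, t i) : ℝ))]
    apply Finset.sum_congr rfl
    intro k hk
    rw [Finset.mem_range] at hk
    have hkr : k ≤ r := by omega
    have : ∀ t ∈ ((Fintype.piFinset fun _ : Fin n => Finset.range (r + 1)).filter
        (fun t => ∑ i, t i ≤ r)).filter (fun t => (∑ i, t i) = k),
        coefR n c (∑ i, t i) * (Aval M (∑ i, t i) : ℝ) = coefR n c k * (Aval M k : ℝ) := by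
      intro t ht
      rw [Finset.mem_filter] at ht
      rw [ht.2]
    rw [Finset.sum_congr rfl this, Finset.sum_const, filter_eq_piAntidiag n r k hkr,
      card_sum_eq n k, nsmul_eq_mul]
    rw [← coeff_identity n M k hn c hc]
    ring
  have h4 := Tsum_le (1/c) (by positivity) (by rw [div_lt_one hcpos]; exact hc) M r
  have h5 : (1/(1-1/c)) = c/(c-1) := by
    rw [one_sub_div (ne_of_gt hcpos)]
    rw [one_div_div]
  calc LamR (n := n) c r m ≤ _ := h2
    _ = _ := h3
    _ ≤ (1/(1-1/c)) ^ (M+1) := h4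
    _ = (c/(c-1)) ^ (M+1) := by rw [h5]

end SchrodingerAux


/-- If `c > 1` and `Φ` is a normalized vector supported on number
states with all entries at most `M`, then `⟨Φ, π(g^r_c) Φ⟩ ≤ (c/(c-1))^{M+1}` for
every `r`. -/
theorem gpoly_expectation_bound {n : ℕ} (hn : 1 ≤ n) (c : ℝ) (hc : 1 < c) (M : ℕ)
    (W : WeylAlgebra n) (S : Schrodinger W) (φ : DSpace n)
    (hsupp : ∀ m ∈ φ.support, ∀ i, m i ≤ M) (hnorm : innerD φ φ = 1) (r : ℕ) :
    innerD φ (S.rep (W.gpoly c r) φ) ≤ (((c / (c - 1)) ^ (M + 1) : ℝ) : ℂ) := by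
  classical
  rw [SchrodingerAux.innerD_gpoly S c r φ]
  have hnormR : ∑ m ∈ φ.support, Complex.normSq (φ m) = 1 := by
    rw [SchrodingerAux.innerD_self φ] at hnorm
    exact_mod_cast hnorm
  rw [Complex.real_le_real]
  calc ∑ m ∈ φ.support, SchrodingerAux.LamR c r m * Complex.normSq (φ m)
      ≤ ∑ m ∈ φ.support, (c/(c-1))^(M+1) * Complex.normSq (φ m) := by
        apply Finset.sum_le_sum
        intro m hm
        exact mul_le_mul_of_nonneg_right
          (SchrodingerAux.LamR_le hn c hc M r m (hsupp m hm)) (Complex.normSq_nonneg _)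
    _ = (c/(c-1))^(M+1) := by rw [← Finset.mul_sum, hnormR, mul_one]
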